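/- Suppose n = 2m and fix a count vector v = (v₁₁, v₁₀, v₀₁, v₀₀) with v₁₁ + v₁₀ + v₀₁ + v₀₀ = n. Suppose at least one of the following holds: (1) v₁₀ ≥ 2 and the pmf of T(v − a, Z') is symmetric–decreasing on (m−1)^{-1}ℤ for every a ∈ {(1,1,0,0), (0,2,0,0), (0,1,1,0), (0,1,0,1)} such that v − a has nonnegative entries, where Z' is uniform on Z(n−2); or (2) v₀₁ ≥ 2 and the same holds for every a ∈ {(1,0,1,0), (0,1,1,0), (0,0,2,0), (0,0,1,1)} such that v − a has nonnegative entries. Then the pmf of T(v, Z) is symmetric–decreasing on m^{-1}ℤ. -/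

import Mathlib

open Finset

/-- Real value of a binary outcome. -/
noncomputable def b2r (b : Bool) : ℝ := if b then 1 else 0

/-- All assignments of `n` subjects in which exactly `m` receive treatment. -/
def Assign (n m : ℕ) : Finset (Fin n → Bool) :=
  Finset.univ.filter fun z => (Finset.univ.filter fun i => z i = true).card = m

/-- Probability of the event `E` under the uniform distribution on `Assign n m`. -/
noncomputable def Pr (n m : ℕ) (E : (Fin n → Bool) → Prop) : ℝ :=
  haveI : DecidablePred E := fun z => Classical.propDecidable (E z)
  (((Assign n m).filter E).card : ℝ) / ((Assign n m).card : ℝ)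

/-- The sample average treatment effect `τ(w)`.  For a table `w`, `(w i).1` is the
control potential outcome `w_i(0)` and `(w i).2` is the treatment potential outcome
`w_i(1)`. -/
noncomputable def sate (n : ℕ) (w : Fin n → Bool × Bool) : ℝ :=
  (∑ j, (b2r (w j).2 - b2r (w j).1)) / (n : ℝ)

/-- Observed outcomes generated by the table `w` under the assignment `z`. -/
def obsOutcome (n : ℕ) (w : Fin n → Bool × Bool) (z : Fin n → Bool) : Fin n → Bool :=
  fun j => if z j then (w j).2 else (w j).1

/-- The Neyman difference-in-means estimator `T(Y, z)`. -/
noncomputable def neyman (n m : ℕ) (Y z : Fin n → Bool) : ℝ :=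
  (∑ j, if z j then b2r (Y j) else 0) / (m : ℝ)
    - (∑ j, if z j then 0 else b2r (Y j)) / ((n : ℝ) - (m : ℝ))

/-- Permutation `p`-value of the table `w` given observed data `(Y, z)`. -/
noncomputable def pval (n m : ℕ) (w : Fin n → Bool × Bool) (Y z : Fin n → Bool) : ℝ :=
  Pr n m fun z' =>
    |neyman n m (obsOutcome n w z') z' - sate n w| ≥ |neyman n m Y z - sate n w|

/-- The table `w` is possible given the observed data `(Y, z)`. -/
def PossibleTable (n : ℕ) (w : Fin n → Bool × Bool) (Y z : Fin n → Bool) : Prop :=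
  ∀ j, (z j = true → (w j).2 = Y j) ∧ (z j = false → (w j).1 = Y j)

/-- Lower endpoint `L_α` of the exact confidence interval `I_α`. -/
noncomputable def Lb (n m : ℕ) (α : ℝ) (Y z : Fin n → Bool) : ℝ :=
  sInf {t : ℝ | ∃ w, PossibleTable n w Y z ∧ α ≤ pval n m w Y z ∧ sate n w = t}

/-- Upper endpoint `U_α` of the exact confidence interval `I_α`. -/
noncomputable def Ub (n m : ℕ) (α : ℝ) (Y z : Fin n → Bool) : ℝ :=
  sSup {t : ℝ | ∃ w, PossibleTable n w Y z ∧ α ≤ pval n m w Y z ∧ sate n w = t}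

/-- `vcount n w a b` is the number of subjects whose treatment potential outcome is `a`
and whose control potential outcome is `b`; e.g. `vcount n w true false = v₁₀`. -/
def vcount (n : ℕ) (w : Fin n → Bool × Bool) (a b : Bool) : ℕ :=
  (Finset.univ.filter fun i => (w i).2 = a ∧ (w i).1 = b).card

/-- `ncount n Y z a b = n_{ab}`, the number of subjects with assignment `a` and
observed outcome `b`. -/
def ncount (n : ℕ) (Y z : Fin n → Bool) (a b : Bool) : ℕ :=
  (Finset.univ.filter fun j => z j = a ∧ Y j = b).card

/-- The pmf of the Neyman estimator `T(w, Z)` under the uniform random assignment. -/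
noncomputable def pmfT (n m : ℕ) (w : Fin n → Bool × Bool) : ℝ → ℝ :=
  fun t => Pr n m fun z => neyman n m (obsOutcome n w z) z = t

/-- The lattice `m⁻¹ ℤ ⊆ ℝ`. -/
def lattZ (m : ℕ) : Set ℝ := {x | ∃ k : ℤ, x = (k : ℝ) / (m : ℝ)}

/-- The lattice `m⁻¹ (2ℤ) ⊆ ℝ`. -/
def lattEven (m : ℕ) : Set ℝ := {x | ∃ k : ℤ, x = (2 * (k : ℝ)) / (m : ℝ)}

/-- The lattice `m⁻¹ (2ℤ + 1) ⊆ ℝ`. -/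
def lattOdd (m : ℕ) : Set ℝ := {x | ∃ k : ℤ, x = (2 * (k : ℝ) + 1) / (m : ℝ)}

/-- `f` is symmetric about `μ` and decreasing away from `μ` along the lattice `L`
(symmetric–decreasing, SD). -/
def SDon (f : ℝ → ℝ) (L : Set ℝ) (μ : ℝ) : Prop :=
  (∀ x : ℝ, μ + x ∈ L → f (μ - x) = f (μ + x)) ∧
    ∀ x y : ℝ, 0 ≤ x → x ≤ y → μ + x ∈ L → μ + y ∈ L → f (μ + y) ≤ f (μ + x)

namespace S11

def SDint (N : ℤ → ℕ) (c : ℤ) : Prop :=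
  (∀ s : ℤ, N (c - s) = N s) ∧ ∀ s : ℤ, c ≤ 2 * s → N (s + 1) ≤ N s



theorem SDint.mono {N : ℤ → ℕ} {c : ℤ} (h : SDint N c) :
    ∀ s t : ℤ, c ≤ 2 * s → s ≤ t → N t ≤ N s := by
  intro s t hs hst
  obtain ⟨d, rfl⟩ : ∃ d : ℕ, t = s + d := ⟨(t - s).toNat, by omega⟩
  clear hst
  induction d with
  | zero => simp
  | succ d ih =>
      have : (s + (d + 1 : ℕ)) = (s + d) + 1 := by push_cast; ring
      rw [this]
      exact le_trans (h.2 (s + d) (by omega)) ih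

theorem SDint.shift2 {N : ℤ → ℕ} {c : ℤ} (h : SDint N c) (a b : ℤ)
    (hab : a ≤ b) (hba : b ≤ a + 1) :
    SDint (fun s => N (s - a) + N (s - b)) (c + a + b) := by
  constructor
  · intro s
    have h1 : c + a + b - s - a = c - (s - b) := by ring
    have h2 : c + a + b - s - b = c - (s - a) := by ring
    simp only [h1, h2, h.1]
    omega
  · intro s hs
    show N (s + 1 - a) + N (s + 1 - b) ≤ N (s - a) + N (s - b)
    have t1 : N (s + 1 - a) ≤ N (s - a) := by
      have : s + 1 - a = (s - a) + 1 := by ring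
      rw [this]
      exact h.2 (s - a) (by omega)
    rcases le_or_gt c (2 * (s - b)) with hc | hc
    · have t2 : N (s + 1 - b) ≤ N (s - b) := by
        have : s + 1 - b = (s - b) + 1 := by ring
        rw [this]
        exact h.2 (s - b) hc
      omega
    · -- c = 2*(s-b) + 1 exactly (since c + a + b ≤ 2s, b ≤ a+1)
      have hce : c = 2 * (s - b) + 1 := by omega
      have t2 : N (s + 1 - b) = N (s - b) := by
        have : s - b = c - (s + 1 - b) := by omega
        rw [this, h.1]
      omega

theorem SDint.sum {ι : Type*} (t : Finset ι) (F : ι → ℤ → ℕ) (c : ℤ)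
    (h : ∀ j ∈ t, SDint (F j) c) : SDint (fun s => ∑ j ∈ t, F j s) c := by
  constructor
  · intro s
    exact Finset.sum_congr rfl fun j hj => (h j hj).1 s
  · intro s hs
    exact Finset.sum_le_sum fun j hj => (h j hj).2 s hs

theorem SDint.of_mul {N : ℤ → ℕ} {c : ℤ} {m : ℕ} (hm : 0 < m)
    (h : SDint (fun s => m * N s) c) : SDint N c := by
  constructor
  · intro s
    have := h.1 s
    simp only at this
    exact Nat.eq_of_mul_eq_mul_left hm this
  · intro s hs
    exact Nat.le_of_mul_le_mul_left (h.2 s hs) hm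

theorem SDint.congr {N M : ℤ → ℕ} {c : ℤ} (h : SDint N c) (he : ∀ s, M s = N s) :
    SDint M c := by
  constructor
  · intro s; rw [he, he, h.1]
  · intro s hs; rw [he, he]; exact h.2 s hs


/-- number of ones among potential outcomes of subject with table entry `p`. -/
def cC (p : Bool × Bool) : ℕ := (if p.2 then 1 else 0) + (if p.1 then 1 else 0)

def Ssum (n : ℕ) (w : Fin n → Bool × Bool) (z : Fin n → Bool) : ℕ :=
  ∑ j, if z j then cC (w j) else 0

def Csum (n : ℕ) (w : Fin n → Bool × Bool) : ℕ := ∑ j, cC (w j)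

def C1 (n : ℕ) (w : Fin n → Bool × Bool) : ℕ := ∑ j, (if (w j).1 then 1 else 0)

noncomputable def Ncnt (n m : ℕ) (w : Fin n → Bool × Bool) (s : ℤ) : ℕ :=
  ((Assign n m).filter (fun z => (Ssum n w z : ℤ) = s)).card

lemma mem_assign {n m : ℕ} {z : Fin n → Bool} :
    z ∈ Assign n m ↔ (Finset.univ.filter fun i => z i = true).card = m := by
  simp [Assign]

lemma assign_card_pos {n m : ℕ} (h : m ≤ n) : 0 < (Assign n m).card := by
  refine Finset.card_pos.2 ⟨fun i => decide ((i : ℕ) < m), ?_⟩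
  rw [mem_assign]
  have h2 : (Finset.univ.filter fun i : Fin n => (decide ((i : ℕ) < m)) = true)
      = (Finset.univ : Finset (Fin m)).map (Fin.castLEEmb h) := by
    ext i
    simp only [Finset.mem_filter, Finset.mem_univ, true_and, Finset.mem_map,
      decide_eq_true_eq]
    constructor
    · intro hi; exact ⟨⟨i, hi⟩, by simp [Fin.castLEEmb]⟩
    · rintro ⟨a, -, rfl⟩; simpa [Fin.castLEEmb] using a.2
  rw [h2, Finset.card_map, Finset.card_univ, Fintype.card_fin]

lemma cC_cast (p : Bool × Bool) : ((cC p : ℕ) : ℝ) = b2r p.2 + b2r p.1 := by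
  rcases p with ⟨a, b⟩; cases a <;> cases b <;> norm_num [cC, b2r]

lemma neyman_eq {m n : ℕ} (hm : 0 < m) (hn : n = 2 * m) (w : Fin n → Bool × Bool)
    (z : Fin n → Bool) :
    neyman n m (obsOutcome n w z) z = ((Ssum n w z : ℝ) - (C1 n w : ℝ)) / (m : ℝ) := by
  have hnm : (n : ℝ) - (m : ℝ) = (m : ℝ) := by subst hn; push_cast; ring
  rw [neyman, hnm]
  have hA : (∑ j, if z j then b2r (obsOutcome n w z j) else 0)
      = ∑ j, (if z j then b2r (w j).2 else 0) := by
    refine Finset.sum_congr rfl fun j _ => ?_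
    by_cases h : z j <;> simp [obsOutcome, h]
  have hB : (∑ j, if z j then 0 else b2r (obsOutcome n w z j))
      = (∑ j, b2r (w j).1) - ∑ j, (if z j then b2r (w j).1 else 0) := by
    rw [← Finset.sum_sub_distrib]
    refine Finset.sum_congr rfl fun j _ => ?_
    by_cases h : z j <;> simp [obsOutcome, h]
  rw [hA, hB]
  have hS : (Ssum n w z : ℝ)
      = (∑ j, (if z j then b2r (w j).2 else 0)) + ∑ j, (if z j then b2r (w j).1 else 0) := by
    rw [Ssum]
    push_cast
    rw [← Finset.sum_add_distrib]
    refine Finset.sum_congr rfl fun j _ => ?_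
    by_cases h : z j
    · simp only [h, if_true]; rw [cC_cast]
    · simp [h]
  have hC : ((C1 n w : ℕ) : ℝ) = ∑ j, b2r (w j).1 := by
    rw [C1]; push_cast
    refine Finset.sum_congr rfl fun j _ => ?_
    cases hw : (w j).1 <;> simp [b2r, hw]
  rw [hS, hC, div_sub_div_same]
  ring_nf

lemma sate_eq {m n : ℕ} (hm : 0 < m) (hn : n = 2 * m) (w : Fin n → Bool × Bool) :
    2 * (m : ℝ) * sate n w = (Csum n w : ℝ) - 2 * (C1 n w : ℝ) := by
  have hn' : (n : ℝ) = 2 * m := by rw [hn]; push_cast; ring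
  have hC : ((C1 n w : ℕ) : ℝ) = ∑ j, b2r (w j).1 := by
    rw [C1]; push_cast
    refine Finset.sum_congr rfl fun j _ => ?_
    cases hw : (w j).1 <;> simp [b2r, hw]
  have hCs : ((Csum n w : ℕ) : ℝ) = ∑ j, (b2r (w j).2 + b2r (w j).1) := by
    rw [Csum]; push_cast
    exact Finset.sum_congr rfl fun j _ => cC_cast _
  rw [sate, hC, hCs, ← hn']
  have hne : (n : ℝ) ≠ 0 := by rw [hn']; positivity
  field_simp
  rw [Finset.sum_add_distrib]
  ring_nf
  rw [Finset.sum_sub_distrib]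

lemma pmfT_eq {m n : ℕ} (hm : 0 < m) (hn : n = 2 * m) (w : Fin n → Bool × Bool)
    (t : ℝ) (k : ℤ) (hk : (m : ℝ) * t + (C1 n w : ℝ) = (k : ℝ)) :
    pmfT n m w t = (Ncnt n m w k : ℝ) / ((Assign n m).card : ℝ) := by
  have hiff : ∀ z ∈ Assign n m,
      (neyman n m (obsOutcome n w z) z = t ↔ (Ssum n w z : ℤ) = k) := by
    intro z _
    rw [neyman_eq hm hn w z]
    have hm' : (m : ℝ) ≠ 0 := by positivity
    constructor
    · intro h
      have : (Ssum n w z : ℝ) = (k : ℝ) := by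
        field_simp at h
        linarith [hk]
      exact_mod_cast this
    · intro h
      have h' : (Ssum n w z : ℝ) = (k : ℝ) := by exact_mod_cast h
      rw [h']
      field_simp
      linarith [hk]
  rw [pmfT, Pr, Ncnt]
  exact congrArg (fun q : ℕ => (q : ℝ) / ((Assign n m).card : ℝ))
    (congrArg Finset.card (Finset.filter_congr hiff))


lemma ssum_add_compl (n : ℕ) (w : Fin n → Bool × Bool) (z : Fin n → Bool) :
    Ssum n w z + Ssum n w (fun j => !(z j)) = Csum n w := by
  rw [Ssum, Ssum, Csum, ← Finset.sum_add_distrib]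
  refine Finset.sum_congr rfl fun j _ => ?_
  cases h : z j <;> simp [h]

lemma compl_mem_assign {n m : ℕ} (hn : n = 2 * m) {z : Fin n → Bool}
    (hz : z ∈ Assign n m) : (fun j => !(z j)) ∈ Assign n m := by
  rw [mem_assign] at hz ⊢
  have he : (Finset.univ.filter fun i => (!(z i)) = true)
      = Finset.univ \ (Finset.univ.filter fun i => z i = true) := by
    ext i; simp
  rw [he, Finset.card_sdiff_of_subset (Finset.filter_subset _ _), Finset.card_univ,
    Fintype.card_fin, hz]
  omega

lemma Ncnt_symm {m n : ℕ} (hn : n = 2 * m) (w : Fin n → Bool × Bool) (s : ℤ) :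
    Ncnt n m w ((Csum n w : ℤ) - s) = Ncnt n m w s := by
  rw [Ncnt, Ncnt]
  apply Finset.card_bij' (i := fun z _ => fun j => !(z j)) (j := fun z _ => fun j => !(z j))
  · intro z hz
    rw [Finset.mem_filter] at hz ⊢
    refine ⟨compl_mem_assign hn hz.1, ?_⟩
    have := ssum_add_compl n w z
    have h2 := hz.2
    omega
  · intro z hz
    rw [Finset.mem_filter] at hz ⊢
    refine ⟨compl_mem_assign hn hz.1, ?_⟩
    have := ssum_add_compl n w z
    have h2 := hz.2
    omega
  · intro z _; funext j; simp
  · intro z _; funext j; simp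

lemma SDon_of_SDint {m n : ℕ} (hm : 0 < m) (hn : n = 2 * m) (w : Fin n → Bool × Bool)
    (h : SDint (Ncnt n m w) (Csum n w)) :
    SDon (pmfT n m w) (lattZ m) (sate n w) := by
  have hm' : (m : ℝ) ≠ 0 := Nat.cast_ne_zero.2 hm.ne'
  have hsate := sate_eq hm hn w
  set μ := sate n w with hμ
  constructor
  · intro x hx
    obtain ⟨k, hk⟩ := hx
    have e1 : (m : ℝ) * (μ + x) + (C1 n w : ℝ) = ((k + C1 n w : ℤ) : ℝ) := by
      rw [hk]; push_cast; field_simp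
    have e2 : (m : ℝ) * (μ - x) + (C1 n w : ℝ)
        = (((Csum n w : ℤ) - (k + C1 n w) : ℤ) : ℝ) := by
      have e3 : (m : ℝ) * (μ + x) = (k : ℝ) := by rw [hk]; field_simp
      have e4 : (m : ℝ) * (μ - x) = 2 * ((m : ℝ) * μ) - (m : ℝ) * (μ + x) := by ring
      have e5 : 2 * ((m : ℝ) * μ) = (Csum n w : ℝ) - 2 * (C1 n w : ℝ) := by
        rw [← hsate]; ring
      push_cast
      rw [e4, e5, e3]; ring
    rw [pmfT_eq hm hn w _ _ e1, pmfT_eq hm hn w _ _ e2, h.1 (k + C1 n w)]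
  · intro x y hx hxy hxl hyl
    obtain ⟨k, hk⟩ := hxl
    obtain ⟨l, hl⟩ := hyl
    have e1 : (m : ℝ) * (μ + x) + (C1 n w : ℝ) = ((k + C1 n w : ℤ) : ℝ) := by
      rw [hk]; push_cast; field_simp
    have e2 : (m : ℝ) * (μ + y) + (C1 n w : ℝ) = ((l + C1 n w : ℤ) : ℝ) := by
      rw [hl]; push_cast; field_simp
    have hmpos : (0 : ℝ) < (m : ℝ) := by positivity
    have hkl : k ≤ l := by
      have : (k : ℝ) ≤ (l : ℝ) := by
        have h1 : (k : ℝ) / m ≤ (l : ℝ) / m := by rw [← hk, ← hl]; linarith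
        exact (div_le_div_iff_of_pos_right hmpos).1 h1
      exact_mod_cast this
    have hks : (Csum n w : ℤ) ≤ 2 * (k + C1 n w) := by
      have h1 : (Csum n w : ℝ) ≤ 2 * ((k : ℝ) + (C1 n w : ℝ)) := by
        have e3 : (m : ℝ) * (μ + x) = (k : ℝ) := by rw [hk]; field_simp
        nlinarith [mul_nonneg (le_of_lt hmpos) hx]
      exact_mod_cast h1
    rw [pmfT_eq hm hn w _ _ e1, pmfT_eq hm hn w _ _ e2]
    have hD : (0 : ℝ) < ((Assign n m).card : ℝ) := by
      exact_mod_cast assign_card_pos (by omega)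
    exact div_le_div_of_nonneg_right
      (Nat.cast_le.2 (h.mono (k + C1 n w) (l + C1 n w) hks (by omega))) hD.le

lemma SDint_of_SDon {m n : ℕ} (hm : 0 < m) (hn : n = 2 * m) (w : Fin n → Bool × Bool)
    (h : SDon (pmfT n m w) (lattZ m) (sate n w)) :
    SDint (Ncnt n m w) (Csum n w) := by
  have hm' : (m : ℝ) ≠ 0 := Nat.cast_ne_zero.2 hm.ne'
  have hmpos : (0 : ℝ) < (m : ℝ) := by positivity
  have hsate := sate_eq hm hn w
  set μ := sate n w with hμ
  refine ⟨Ncnt_symm hn w, ?_⟩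
  intro s hs
  set x : ℝ := ((s : ℝ) - (C1 n w : ℝ)) / m - μ with hxdef
  set y : ℝ := x + 1 / m with hydef
  have hxl : μ + x ∈ lattZ m := ⟨s - C1 n w, by rw [hxdef]; push_cast; ring⟩
  have hyl : μ + y ∈ lattZ m := ⟨s + 1 - C1 n w, by rw [hydef, hxdef]; push_cast; field_simp; ring⟩
  have hx0 : 0 ≤ x := by
    have h1 : (Csum n w : ℝ) ≤ 2 * (s : ℝ) := by exact_mod_cast hs
    rw [hxdef]
    rw [sub_nonneg, le_div_iff₀ hmpos]
    nlinarith
  have hxy : x ≤ y := by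
    rw [hydef]
    have : (0:ℝ) ≤ 1 / m := by positivity
    linarith
  have hstep := h.2 x y hx0 hxy hxl hyl
  have e1 : (m : ℝ) * (μ + x) + (C1 n w : ℝ) = ((s : ℤ) : ℝ) := by
    rw [hxdef]; push_cast; field_simp; ring
  have e2 : (m : ℝ) * (μ + y) + (C1 n w : ℝ) = ((s + 1 : ℤ) : ℝ) := by
    rw [hydef, hxdef]; push_cast; field_simp; ring
  rw [pmfT_eq hm hn w _ _ e1, pmfT_eq hm hn w _ _ e2] at hstep
  have hD : (0 : ℝ) < ((Assign n m).card : ℝ) := by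
    exact_mod_cast assign_card_pos (by omega)
  exact_mod_cast (div_le_div_iff_of_pos_right hD).1 hstep


lemma cC_le_two (p : Bool × Bool) : cC p ≤ 2 := by
  rcases p with ⟨a, b⟩; cases a <;> cases b <;> simp [cC]

lemma card_erase_if {α : Type*} [DecidableEq α] (t : Finset α) (a : α) :
    (t.erase a).card + (if a ∈ t then 1 else 0) = t.card := by
  by_cases h : a ∈ t
  · have h0 : 0 < t.card := Finset.card_pos.2 ⟨a, h⟩
    simp [h, Finset.card_erase_of_mem h]
    omega
  · simp [h, Finset.erase_eq_of_notMem h]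

lemma sum_erase_if {α M : Type*} [DecidableEq α] [AddCommMonoid M] (t : Finset α)
    (f : α → M) (a : α) :
    (∑ x ∈ t.erase a, f x) + (if a ∈ t then f a else 0) = ∑ x ∈ t, f x := by
  by_cases h : a ∈ t
  · simp only [h, if_true]
    exact Finset.sum_erase_add t f h
  · simp [h, Finset.erase_eq_of_notMem h]

/-- the other `n - 2` subjects -/
def Dset {n : ℕ} (i j : Fin n) : Finset (Fin n) := (Finset.univ.erase i).erase j

lemma mem_Dset {n : ℕ} {i j k : Fin n} : k ∈ Dset i j ↔ k ≠ j ∧ k ≠ i := by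
  simp [Dset]

lemma Dset_comm {n : ℕ} (i j : Fin n) : Dset i j = Dset j i := by
  ext k; simp [mem_Dset]; tauto

lemma Dset_card {n : ℕ} (i j : Fin n) (hij : i ≠ j) : (Dset i j).card = n - 2 := by
  rw [Dset, Finset.card_erase_of_mem, Finset.card_erase_of_mem (Finset.mem_univ i),
    Finset.card_univ, Fintype.card_fin]
  · omega
  · exact Finset.mem_erase.2 ⟨hij.symm, Finset.mem_univ j⟩

/-- enumeration of `Dset i j` by `Fin (n - 2)` -/
noncomputable def eqv {n : ℕ} (i j : Fin n) (hij : i ≠ j) :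
    Fin (n - 2) ≃o {x // x ∈ Dset i j} :=
  (Dset i j).orderIsoOfFin (Dset_card i j hij)

/-- the reduced table -/
noncomputable def subT {n : ℕ} (w : Fin n → Bool × Bool) (i j : Fin n) (hij : i ≠ j) :
    Fin (n - 2) → Bool × Bool :=
  fun l => w ((eqv i j hij l : Fin n))

lemma subT_comm {n : ℕ} (w : Fin n → Bool × Bool) (i j : Fin n) (hij : i ≠ j) :
    subT w j i hij.symm = subT w i j hij := by
  have key : ∀ (D₁ D₂ : Finset (Fin n)) (_ : D₁ = D₂) (h₁ : D₁.card = n - 2)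
      (h₂ : D₂.card = n - 2) (l : Fin (n - 2)),
      ((D₁.orderIsoOfFin h₁ l : Fin n)) = (D₂.orderIsoOfFin h₂ l : Fin n) := by
    rintro D₁ D₂ rfl h₁ h₂ l; rfl
  funext l
  exact congrArg w (key _ _ (Dset_comm j i) _ _ l)

/-- splitting a filter over `Fin n` into `i`, `j`, and `Dset` parts -/
lemma card_univ_split {n : ℕ} (i j : Fin n) (hij : i ≠ j) (p : Fin n → Prop)
    [DecidablePred p] :
    (Finset.univ.filter p).card
      = (if p i then 1 else 0) + (if p j then 1 else 0) + ((Dset i j).filter p).card := by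
  have h1 : ((Dset i j).filter p) = (((Finset.univ.filter p).erase i).erase j) := by
    rw [Dset, Finset.filter_erase, Finset.filter_erase]
  rw [h1]
  have h2 := card_erase_if ((Finset.univ.filter p).erase i) j
  have h3 := card_erase_if (Finset.univ.filter p) i
  have hji : (j ∈ (Finset.univ.filter p).erase i) ↔ p j := by
    simp [Finset.mem_erase, hij.symm]
  have hii : (i ∈ Finset.univ.filter p) ↔ p i := by simp
  by_cases hpj : p j <;> by_cases hpi : p i <;>
    simp only [hpj, hpi, hji, hii, if_true, if_false, iff_true, iff_false] at h2 h3 ⊢ <;>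
    omega

lemma sum_univ_split {n : ℕ} (i j : Fin n) (hij : i ≠ j) {M : Type*} [AddCommMonoid M]
    (f : Fin n → M) :
    ∑ k, f k = f i + f j + ∑ k ∈ Dset i j, f k := by
  have h2 := sum_erase_if (Finset.univ.erase i) f j
  have h3 := sum_erase_if (Finset.univ : Finset (Fin n)) f i
  have hji : (j ∈ (Finset.univ : Finset (Fin n)).erase i) := by
    simp [Finset.mem_erase, hij.symm]
  rw [Dset]
  simp only [hji, if_true, Finset.mem_univ] at h2 h3
  rw [← h3, ← h2]
  abel

lemma sum_subT {n : ℕ} (w : Fin n → Bool × Bool) (i j : Fin n) (hij : i ≠ j)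
    {M : Type*} [AddCommMonoid M] (g : Fin n → M) :
    ∑ l, g ((eqv i j hij l : Fin n)) = ∑ k ∈ Dset i j, g k := by
  exact Finset.sum_nbij (fun l => ((eqv i j hij l : Fin n)))
    (fun l _ => ((eqv i j hij l).2))
    (fun l₁ _ l₂ _ h => (eqv i j hij).injective (Subtype.ext h))
    (fun k hk => ⟨(eqv i j hij).symm ⟨k, hk⟩, Finset.mem_univ _, by simp⟩)
    (fun l _ => rfl)

lemma csum_subT {n : ℕ} (w : Fin n → Bool × Bool) (i j : Fin n) (hij : i ≠ j) :
    Csum (n - 2) (subT w i j hij) + cC (w i) + cC (w j) = Csum n w := by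
  rw [Csum, Csum]
  have h1 : ∑ l, cC (subT w i j hij l) = ∑ k ∈ Dset i j, cC (w k) :=
    sum_subT w i j hij (g := fun k => cC (w k))
  rw [h1, sum_univ_split i j hij (f := fun k => cC (w k))]
  ring

lemma vcount_subT {n : ℕ} (w : Fin n → Bool × Bool) (i j : Fin n) (hij : i ≠ j)
    (a b : Bool) :
    vcount (n - 2) (subT w i j hij) a b
        + (if (w i).2 = a ∧ (w i).1 = b then 1 else 0)
        + (if (w j).2 = a ∧ (w j).1 = b then 1 else 0)
      = vcount n w a b := by
  rw [vcount, vcount]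
  have h1 : (Finset.univ.filter
        fun l => (subT w i j hij l).2 = a ∧ (subT w i j hij l).1 = b).card
      = ((Dset i j).filter fun k => (w k).2 = a ∧ (w k).1 = b).card := by
    rw [Finset.card_filter, Finset.card_filter]
    exact sum_subT w i j hij
      (g := fun k => if (w k).2 = a ∧ (w k).1 = b then (1 : ℕ) else 0)
  rw [h1, card_univ_split i j hij (p := fun k => (w k).2 = a ∧ (w k).1 = b)]
  ring

lemma card_split {n m : ℕ} (hm : 0 < m) (w : Fin n → Bool × Bool)
    (i j : Fin n) (hij : i ≠ j) (s : ℤ) :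
    ((Assign n m).filter fun z => z i = true ∧ z j = false ∧ (Ssum n w z : ℤ) = s).card
      = Ncnt (n - 2) (m - 1) (subT w i j hij) (s - cC (w i)) := by
  rw [Ncnt]
  set e := eqv i j hij with he
  have hiD : i ∉ Dset i j := by simp [mem_Dset]
  have hjD : j ∉ Dset i j := by simp [mem_Dset]
  set G : (Fin (n - 2) → Bool) → (Fin n → Bool) := fun z' k =>
    if h : k ∈ Dset i j then z' (e.symm ⟨k, h⟩) else decide (k = i) with hG
  -- sums transfer
  have hsumS : ∀ z : Fin n → Bool,
      Ssum (n - 2) (subT w i j hij) (fun l => z (e l : Fin n))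
        = ∑ k ∈ Dset i j, (if z k = true then cC (w k) else 0) := by
    intro z
    rw [Ssum]
    exact sum_subT w i j hij (g := fun k => if z k = true then cC (w k) else 0)
  have hsplitS : ∀ z : Fin n → Bool,
      Ssum n w z = (if z i = true then cC (w i) else 0) + (if z j = true then cC (w j) else 0)
        + ∑ k ∈ Dset i j, (if z k = true then cC (w k) else 0) := by
    intro z
    rw [Ssum]
    exact sum_univ_split i j hij (f := fun k => if z k = true then cC (w k) else 0)
  have hcard2 : ∀ z : Fin n → Bool,
      (Finset.univ.filter fun l => z (e l : Fin n) = true).card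
        = ((Dset i j).filter fun k => z k = true).card := by
    intro z
    rw [Finset.card_filter, Finset.card_filter]
    exact sum_subT w i j hij (g := fun k => if z k = true then (1 : ℕ) else 0)
  have hcardsplit : ∀ z : Fin n → Bool,
      (Finset.univ.filter fun k => z k = true).card
        = (if z i = true then 1 else 0) + (if z j = true then 1 else 0)
          + ((Dset i j).filter fun k => z k = true).card := by
    intro z
    rw [Finset.card_filter, Finset.card_filter]
    exact sum_univ_split i j hij (f := fun k => if z k = true then (1 : ℕ) else 0)
  have hGD : ∀ (z' : Fin (n - 2) → Bool) (k : Fin n) (hk : k ∈ Dset i j),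
      G z' k = z' (e.symm ⟨k, hk⟩) := by
    intro z' k hk; rw [hG]; simp [hk]
  have hGe : ∀ (z' : Fin (n - 2) → Bool) (l : Fin (n - 2)), G z' (e l : Fin n) = z' l := by
    intro z' l
    rw [hGD z' _ (e l).2]
    congr
    rw [Subtype.coe_eta]
    exact e.symm_apply_apply l
  have hGi : ∀ z', G z' i = true := by intro z'; rw [hG]; simp [hiD]
  have hGj : ∀ z', G z' j = false := by
    intro z'; rw [hG]; simp [hjD]; exact fun h => absurd h.symm hij
  apply Finset.card_bij' (i := fun z _ => fun l => z (e l : Fin n)) (j := fun z' _ => G z')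
  · -- forward membership
    intro z hz
    rw [Finset.mem_filter] at hz
    obtain ⟨hzA, hzi, hzj, hzS⟩ := hz
    rw [mem_assign] at hzA
    rw [Finset.mem_filter, mem_assign]
    have h1 := hcardsplit z
    have h2 := hcard2 z
    have h3 := hsplitS z
    have h4 := hsumS z
    rw [hzi, hzj] at h1 h3
    simp only [if_true, Bool.false_eq_true, if_false] at h1 h3
    constructor
    · omega
    · have : (Ssum (n - 2) (subT w i j hij) fun l => z (e l : Fin n))
          = ∑ k ∈ Dset i j, (if z k = true then cC (w k) else 0) := h4
      rw [this]
      omega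
  · -- backward membership
    intro z' hz'
    rw [Finset.mem_filter, mem_assign] at hz'
    obtain ⟨hzA, hzS⟩ := hz'
    rw [Finset.mem_filter, mem_assign]
    have h1 := hcardsplit (G z')
    have h2 := hcard2 (G z')
    have h3 := hsplitS (G z')
    have h4 := hsumS (G z')
    simp only [hGe] at h2 h4
    rw [hGi, hGj] at h1 h3
    simp only [if_true, Bool.false_eq_true, if_false] at h1 h3
    have h2' : (Finset.univ.filter fun l => z' l = true).card
        = ((Dset i j).filter fun k => G z' k = true).card := h2
    have h4' : Ssum (n - 2) (subT w i j hij) z'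
        = ∑ k ∈ Dset i j, (if G z' k = true then cC (w k) else 0) := h4
    refine ⟨?_, hGi z', hGj z', ?_⟩
    · omega
    · omega
  · -- left inverse
    intro z hz
    beta_reduce
    rw [Finset.mem_filter] at hz
    obtain ⟨_, hzi, hzj, _⟩ := hz
    funext k
    by_cases hk : k ∈ Dset i j
    · calc G (fun l => z (e l : Fin n)) k = z ((e (e.symm ⟨k, hk⟩) : Fin n)) := hGD (fun l => z (e l : Fin n)) k hk
        _ = z k := by rw [e.apply_symm_apply]
    · rw [hG]
      simp only [hk, dite_false]
      rcases mem_Dset.not.1 hk with h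
      push_neg at h
      by_cases hki : k = i
      · subst hki; simp [hzi]
      · have : k = j := by
          by_contra hkj
          exact hk (mem_Dset.2 ⟨hkj, hki⟩)
        subst this; simp [hzj, hki]
  · -- right inverse
    intro z' _
    beta_reduce
    funext l
    exact hGe z' l

lemma count_controls {n m : ℕ} {z : Fin n → Bool} (hz : z ∈ Assign n m) (i : Fin n)
    (hzi : z i = true) :
    ((Finset.univ.erase i).filter fun j => z j = false).card = n - m := by
  have he : ((Finset.univ.erase i).filter fun j => z j = false)
      = Finset.univ.filter fun j => z j = false := by
    ext k
    simp only [Finset.mem_filter, Finset.mem_erase, Finset.mem_univ, true_and, and_true]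
    constructor
    · tauto
    · intro hk
      refine ⟨fun hc => ?_, hk⟩
      rw [hc, hzi] at hk; exact Bool.noConfusion hk
  have he2 : (Finset.univ.filter fun j => z j = false)
      = Finset.univ \ (Finset.univ.filter fun j => z j = true) := by
    ext k; simp
  rw [he, he2, Finset.card_sdiff_of_subset (Finset.filter_subset _ _), Finset.card_univ,
    Fintype.card_fin, mem_assign.1 hz]

lemma count_treated {n m : ℕ} {z : Fin n → Bool} (hz : z ∈ Assign n m) (i : Fin n)
    (hzi : z i = false) :
    ((Finset.univ.erase i).filter fun j => z j = true).card = m := by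
  have he : ((Finset.univ.erase i).filter fun j => z j = true)
      = Finset.univ.filter fun j => z j = true := by
    ext k
    simp only [Finset.mem_filter, Finset.mem_erase, Finset.mem_univ, true_and, and_true]
    constructor
    · tauto
    · intro hk
      refine ⟨fun hc => ?_, hk⟩
      rw [hc, hzi] at hk; exact Bool.noConfusion hk
  rw [he, mem_assign.1 hz]

lemma key_identity {n m : ℕ} (hn : n = 2 * m) (hm : 0 < m) (w : Fin n → Bool × Bool)
    (i : Fin n) (s : ℤ) :
    m * Ncnt n m w s
      = ∑ j ∈ Finset.univ.erase i,
          (((Assign n m).filter fun z => z i = true ∧ z j = false ∧ (Ssum n w z : ℤ) = s).card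
            + ((Assign n m).filter fun z => z j = true ∧ z i = false ∧ (Ssum n w z : ℤ) = s).card) := by
  have hnm : n - m = m := by omega
  have hsplit : Ncnt n m w s
      = ((Assign n m).filter fun z => z i = true ∧ (Ssum n w z : ℤ) = s).card
        + ((Assign n m).filter fun z => z i = false ∧ (Ssum n w z : ℤ) = s).card := by
    rw [Ncnt, Finset.card_filter, Finset.card_filter, Finset.card_filter,
      ← Finset.sum_add_distrib]
    refine Finset.sum_congr rfl fun z _ => ?_
    by_cases h1 : z i = true <;> by_cases h2 : (Ssum n w z : ℤ) = s <;>
      simp [h1, h2, Bool.not_eq_true] at * <;> simp [h1, h2]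
  have hB : ∑ j ∈ Finset.univ.erase i,
        ((Assign n m).filter fun z => z i = true ∧ z j = false ∧ (Ssum n w z : ℤ) = s).card
      = (n - m) * ((Assign n m).filter fun z => z i = true ∧ (Ssum n w z : ℤ) = s).card := by
    have h1 : ∀ j, ((Assign n m).filter
          fun z => z i = true ∧ z j = false ∧ (Ssum n w z : ℤ) = s).card
        = ∑ z ∈ Assign n m, (if z i = true ∧ z j = false ∧ (Ssum n w z : ℤ) = s
            then (1 : ℕ) else 0) := fun j => Finset.card_filter _ _
    calc ∑ j ∈ Finset.univ.erase i, ((Assign n m).filter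
            fun z => z i = true ∧ z j = false ∧ (Ssum n w z : ℤ) = s).card
        = ∑ j ∈ Finset.univ.erase i, ∑ z ∈ Assign n m,
            (if z i = true ∧ z j = false ∧ (Ssum n w z : ℤ) = s then (1 : ℕ) else 0) := by
          exact Finset.sum_congr rfl fun j _ => h1 j
      _ = ∑ z ∈ Assign n m, ∑ j ∈ Finset.univ.erase i,
            (if z i = true ∧ z j = false ∧ (Ssum n w z : ℤ) = s then (1 : ℕ) else 0) :=
          Finset.sum_comm
      _ = ∑ z ∈ Assign n m, (if z i = true ∧ (Ssum n w z : ℤ) = s then n - m else 0) := by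
          refine Finset.sum_congr rfl fun z hz => ?_
          by_cases h1' : z i = true <;> by_cases h2 : (Ssum n w z : ℤ) = s
          · simp only [h1', h2, true_and, and_true, if_true]
            rw [← Finset.card_filter]
            exact count_controls hz i h1'
          all_goals simp [h1', h2]
      _ = (n - m) * ((Assign n m).filter
            fun z => z i = true ∧ (Ssum n w z : ℤ) = s).card := by
          rw [Finset.card_filter, Finset.mul_sum]
          refine Finset.sum_congr rfl fun z _ => ?_
          by_cases h : z i = true ∧ (Ssum n w z : ℤ) = s <;> simp [h]
  have hC : ∑ j ∈ Finset.univ.erase i,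
        ((Assign n m).filter fun z => z j = true ∧ z i = false ∧ (Ssum n w z : ℤ) = s).card
      = m * ((Assign n m).filter fun z => z i = false ∧ (Ssum n w z : ℤ) = s).card := by
    calc ∑ j ∈ Finset.univ.erase i, ((Assign n m).filter
            fun z => z j = true ∧ z i = false ∧ (Ssum n w z : ℤ) = s).card
        = ∑ j ∈ Finset.univ.erase i, ∑ z ∈ Assign n m,
            (if z j = true ∧ z i = false ∧ (Ssum n w z : ℤ) = s then (1 : ℕ) else 0) :=
          Finset.sum_congr rfl fun j _ => Finset.card_filter _ _
      _ = ∑ z ∈ Assign n m, ∑ j ∈ Finset.univ.erase i,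
            (if z j = true ∧ z i = false ∧ (Ssum n w z : ℤ) = s then (1 : ℕ) else 0) :=
          Finset.sum_comm
      _ = ∑ z ∈ Assign n m, (if z i = false ∧ (Ssum n w z : ℤ) = s then m else 0) := by
          refine Finset.sum_congr rfl fun z hz => ?_
          by_cases h1' : z i = false <;> by_cases h2 : (Ssum n w z : ℤ) = s
          · simp only [h1', h2, true_and, and_true, if_true]
            rw [← Finset.card_filter]
            exact count_treated hz i h1'
          all_goals simp [h1', h2]
      _ = m * ((Assign n m).filter
            fun z => z i = false ∧ (Ssum n w z : ℤ) = s).card := by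
          rw [Finset.card_filter, Finset.mul_sum]
          refine Finset.sum_congr rfl fun z _ => ?_
          by_cases h : z i = false ∧ (Ssum n w z : ℤ) = s <;> simp [h]
  rw [Finset.sum_add_distrib, hB, hC, hsplit, hnm]
  ring

theorem SDint.shift2' {N : ℤ → ℕ} {c : ℤ} (h : SDint N c) (a b : ℤ)
    (hd1 : a ≤ b + 1) (hd2 : b ≤ a + 1) :
    SDint (fun s => N (s - a) + N (s - b)) (c + a + b) := by
  rcases le_total a b with hab | hba
  · exact h.shift2 a b hab (by omega)
  · have h2 := h.shift2 b a hba (by omega)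
    have hc : c + b + a = c + a + b := by ring
    rw [hc] at h2
    exact h2.congr (fun s => Nat.add_comm _ _)

lemma SDint_of_zero {n' m' : ℕ} (hn' : n' = 0) (hm' : m' = 0)
    (w0 : Fin n' → Bool × Bool) : SDint (Ncnt n' m' w0) (Csum n' w0) := by
  subst hn'; subst hm'
  have hC : Csum 0 w0 = 0 := by simp [Csum]
  have hS : ∀ z, Ssum 0 w0 z = 0 := fun z => by simp [Ssum]
  constructor
  · intro s
    rw [Ncnt, Ncnt, hC]
    apply congrArg Finset.card
    apply Finset.filter_congr
    intro z _
    rw [hS]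
    simp only [Nat.cast_zero]
    omega
  · intro s hs
    have hemp : ((Assign 0 0).filter fun z => (Ssum 0 w0 z : ℤ) = s + 1) = ∅ := by
      apply Finset.filter_false_of_mem
      intro z _
      rw [hS]
      simp only [Nat.cast_zero]
      omega
    rw [Ncnt, hemp]
    simp

lemma main_step {n m : ℕ} (hn : n = 2 * m) (hm : 0 < m) (w : Fin n → Bool × Bool)
    (i : Fin n) (hci : cC (w i) = 1)
    (hsub : ∀ j : Fin n, ∀ hij : i ≠ j,
      SDint (Ncnt (n - 2) (m - 1) (subT w i j hij)) (Csum (n - 2) (subT w i j hij))) :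
    SDint (Ncnt n m w) (Csum n w) := by
  apply SDint.of_mul hm
  apply SDint.congr (N := fun s => ∑ j ∈ Finset.univ.erase i,
      (((Assign n m).filter fun z => z i = true ∧ z j = false ∧ (Ssum n w z : ℤ) = s).card
        + ((Assign n m).filter fun z => z j = true ∧ z i = false ∧ (Ssum n w z : ℤ) = s).card))
    ?_ (fun s => key_identity hn hm w i s)
  apply SDint.sum
  intro j hj
  have hij : i ≠ j := fun h => (Finset.mem_erase.1 hj).1 h.symm
  have e1 : ∀ s, ((Assign n m).filter
        fun z => z i = true ∧ z j = false ∧ (Ssum n w z : ℤ) = s).card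
      = Ncnt (n - 2) (m - 1) (subT w i j hij) (s - cC (w i)) :=
    fun s => card_split hm w i j hij s
  have e2 : ∀ s, ((Assign n m).filter
        fun z => z j = true ∧ z i = false ∧ (Ssum n w z : ℤ) = s).card
      = Ncnt (n - 2) (m - 1) (subT w i j hij) (s - cC (w j)) := by
    intro s
    rw [card_split hm w j i hij.symm s, subT_comm]
  have hc : ((Csum (n - 2) (subT w i j hij) : ℤ) + (cC (w i) : ℤ) + (cC (w j) : ℤ))
      = (Csum n w : ℤ) := by
    exact_mod_cast congrArg (Nat.cast : ℕ → ℤ) (csum_subT w i j hij)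
  rw [← hc]
  have hcj := cC_le_two (w j)
  refine SDint.congr (SDint.shift2' (hsub j hij) (cC (w i) : ℤ) (cC (w j) : ℤ)
    (by omega) (by omega)) ?_
  intro s
  rw [e1 s, e2 s]

end S11

/-- Induction step for the SD property in the balanced case.  Let
`v = (v₁₁, v₁₀, v₀₁, v₀₀)` be the count vector of `w`.  If either
(1) `v₁₀ ≥ 2` and for every `a ∈ {(1,1,0,0), (0,2,0,0), (0,1,1,0), (0,1,0,1)}` with
`v − a` componentwise nonnegative, the pmf of `T(v − a, Z')` (with `Z'` uniform on the
assignments of `n − 2` subjects with `m − 1` treated) is SD on `(m−1)⁻¹ℤ`; or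
(2) `v₀₁ ≥ 2` and the same holds for every
`a ∈ {(1,0,1,0), (0,1,1,0), (0,0,2,0), (0,0,1,1)}`;
then the pmf of `T(v, Z)` is SD on `m⁻¹ℤ`. -/
theorem stmt11 (m : ℕ) (hm : 0 < m) (n : ℕ) (hn : n = 2 * m)
    (w : Fin n → Bool × Bool)
    (h :
      (2 ≤ vcount n w true false ∧
          ∀ a1 a2 a3 a4 : ℕ,
            ((a1, a2, a3, a4) = ((1 : ℕ), (1 : ℕ), (0 : ℕ), (0 : ℕ)) ∨
              (a1, a2, a3, a4) = ((0 : ℕ), (2 : ℕ), (0 : ℕ), (0 : ℕ)) ∨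
              (a1, a2, a3, a4) = ((0 : ℕ), (1 : ℕ), (1 : ℕ), (0 : ℕ)) ∨
              (a1, a2, a3, a4) = ((0 : ℕ), (1 : ℕ), (0 : ℕ), (1 : ℕ))) →
            a1 ≤ vcount n w true true → a2 ≤ vcount n w true false →
            a3 ≤ vcount n w false true → a4 ≤ vcount n w false false →
            ∀ w0 : Fin (n - 2) → Bool × Bool,
              vcount (n - 2) w0 true true = vcount n w true true - a1 →
              vcount (n - 2) w0 true false = vcount n w true false - a2 →
              vcount (n - 2) w0 false true = vcount n w false true - a3 →
              vcount (n - 2) w0 false false = vcount n w false false - a4 →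
              SDon (pmfT (n - 2) (m - 1) w0) (lattZ (m - 1)) (sate (n - 2) w0)) ∨
        (2 ≤ vcount n w false true ∧
          ∀ a1 a2 a3 a4 : ℕ,
            ((a1, a2, a3, a4) = ((1 : ℕ), (0 : ℕ), (1 : ℕ), (0 : ℕ)) ∨
              (a1, a2, a3, a4) = ((0 : ℕ), (1 : ℕ), (1 : ℕ), (0 : ℕ)) ∨
              (a1, a2, a3, a4) = ((0 : ℕ), (0 : ℕ), (2 : ℕ), (0 : ℕ)) ∨
              (a1, a2, a3, a4) = ((0 : ℕ), (0 : ℕ), (1 : ℕ), (1 : ℕ))) →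
            a1 ≤ vcount n w true true → a2 ≤ vcount n w true false →
            a3 ≤ vcount n w false true → a4 ≤ vcount n w false false →
            ∀ w0 : Fin (n - 2) → Bool × Bool,
              vcount (n - 2) w0 true true = vcount n w true true - a1 →
              vcount (n - 2) w0 true false = vcount n w true false - a2 →
              vcount (n - 2) w0 false true = vcount n w false true - a3 →
              vcount (n - 2) w0 false false = vcount n w false false - a4 →
              SDon (pmfT (n - 2) (m - 1) w0) (lattZ (m - 1)) (sate (n - 2) w0))) :
    SDon (pmfT n m w) (lattZ m) (sate n w) := by
  apply S11.SDon_of_SDint hm hn w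
  rcases h with ⟨hv, hall⟩ | ⟨hv, hall⟩
  · -- case 1 : v₁₀ ≥ 2
    have hpos : 0 < (Finset.univ.filter fun k => (w k).2 = true ∧ (w k).1 = false).card := by
      have hv' : vcount n w true false
          = (Finset.univ.filter fun k => (w k).2 = true ∧ (w k).1 = false).card := rfl
      omega
    obtain ⟨i, hi⟩ := Finset.card_pos.1 hpos
    have hi' := Finset.mem_filter.1 hi
    have hi2 : (w i).2 = true := hi'.2.1
    have hi1 : (w i).1 = false := hi'.2.2
    apply S11.main_step hn hm w i (by simp [S11.cC, hi2, hi1])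
    intro j hij
    by_cases hm1 : m = 1
    · exact S11.SDint_of_zero (by omega) (by omega) _
    · apply S11.SDint_of_SDon (m := m - 1) (by omega) (by omega)
      set w0 := S11.subT w i j hij with hw0
      have V11 := S11.vcount_subT w i j hij true true
      have V10 := S11.vcount_subT w i j hij true false
      have V01 := S11.vcount_subT w i j hij false true
      have V00 := S11.vcount_subT w i j hij false false
      rw [← hw0] at V11 V10 V01 V00
      cases hj2 : (w j).2 <;> cases hj1 : (w j).1 <;>
        simp only [hi2, hi1, hj2, hj1] at V11 V10 V01 V00 <;>
        norm_num at V11 V10 V01 V00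
      · -- j type 00 : a = (0,1,0,1)
        refine hall 0 1 0 1 (Or.inr (Or.inr (Or.inr rfl))) (by omega) (by omega) (by omega)
          (by omega) w0 (by omega) (by omega) (by omega) (by omega)
      · -- j type 01 : a = (0,1,1,0)
        refine hall 0 1 1 0 (Or.inr (Or.inr (Or.inl rfl))) (by omega) (by omega) (by omega)
          (by omega) w0 (by omega) (by omega) (by omega) (by omega)
      · -- j type 10 : a = (0,2,0,0)
        refine hall 0 2 0 0 (Or.inr (Or.inl rfl)) (by omega) (by omega) (by omega)
          (by omega) w0 (by omega) (by omega) (by omega) (by omega)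
      · -- j type 11 : a = (1,1,0,0)
        refine hall 1 1 0 0 (Or.inl rfl) (by omega) (by omega) (by omega)
          (by omega) w0 (by omega) (by omega) (by omega) (by omega)
  · -- case 2 : v₀₁ ≥ 2
    have hpos : 0 < (Finset.univ.filter fun k => (w k).2 = false ∧ (w k).1 = true).card := by
      have hv' : vcount n w false true
          = (Finset.univ.filter fun k => (w k).2 = false ∧ (w k).1 = true).card := rfl
      omega
    obtain ⟨i, hi⟩ := Finset.card_pos.1 hpos
    have hi' := Finset.mem_filter.1 hi
    have hi2 : (w i).2 = false := hi'.2.1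
    have hi1 : (w i).1 = true := hi'.2.2
    apply S11.main_step hn hm w i (by simp [S11.cC, hi2, hi1])
    intro j hij
    by_cases hm1 : m = 1
    · exact S11.SDint_of_zero (by omega) (by omega) _
    · apply S11.SDint_of_SDon (m := m - 1) (by omega) (by omega)
      set w0 := S11.subT w i j hij with hw0
      have V11 := S11.vcount_subT w i j hij true true
      have V10 := S11.vcount_subT w i j hij true false
      have V01 := S11.vcount_subT w i j hij false true
      have V00 := S11.vcount_subT w i j hij false false
      rw [← hw0] at V11 V10 V01 V00
      cases hj2 : (w j).2 <;> cases hj1 : (w j).1 <;>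
        simp only [hi2, hi1, hj2, hj1] at V11 V10 V01 V00 <;>
        norm_num at V11 V10 V01 V00
      · -- j type 00 : a = (0,0,1,1)
        refine hall 0 0 1 1 (Or.inr (Or.inr (Or.inr rfl))) (by omega) (by omega) (by omega)
          (by omega) w0 (by omega) (by omega) (by omega) (by omega)
      · -- j type 01 : a = (0,0,2,0)
        refine hall 0 0 2 0 (Or.inr (Or.inr (Or.inl rfl))) (by omega) (by omega) (by omega)
          (by omega) w0 (by omega) (by omega) (by omega) (by omega)
      · -- j type 10 : a = (0,1,1,0)
        refine hall 0 1 1 0 (Or.inr (Or.inl rfl)) (by omega) (by omega) (by omega)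
          (by omega) w0 (by omega) (by omega) (by omega) (by omega)
      · -- j type 11 : a = (1,0,1,0)
        refine hall 1 0 1 0 (Or.inl rfl) (by omega) (by omega) (by omega)
          (by omega) w0 (by omega) (by omega) (by omega) (by omega)
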